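/- arXiv:1701.06364 — 7 statements merged into one kernel-verified Lean document; each statement's English description precedes it below -/
import Mathlib

section
/- For every positive integer k there exists a digraph in which every vertex has out-degree at least 2k-2 but which does not contain k pairwise vertex-disjoint directed cycles; consequently f(k) ≥ 2k-1. (Such a digraph is the complete digraph on 2k-1 vertices, which has a bidirectional edge between every pair of distinct vertices and no loops.) -/
/-- A nonempty list of pairwise distinct vertices forms a directed cycle:
consecutive vertices are adjacent and the last vertex is adjacent to the first.
Lists of length 1 are loops, lists of length 2 are bidirectional edges. -/
def IsCycle {V : Type} (Adj : V → V → Prop) (c : List V) : Prop :=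
  c ≠ [] ∧ c.Nodup ∧ c.Chain' Adj ∧ ∀ x ∈ c.getLast?, ∀ y ∈ c.head?, Adj x y

/-- The digraph `Adj` contains `k` pairwise vertex-disjoint directed cycles. -/
def HasDisjointCycles {V : Type} (Adj : V → V → Prop) (k : ℕ) : Prop :=
  ∃ c : Fin k → List V, (∀ i, IsCycle Adj (c i)) ∧
    Pairwise fun i j => ∀ x, x ∈ c i → x ∉ c j

/-- For every positive `k` there is a digraph with minimum out-degree at least
`2k-2` without `k` disjoint cycles (the complete digraph on `2k-1` vertices),
hence `f(k) ≥ 2k-1`. -/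
theorem f_ge_lower_bound (k : ℕ) (hk : 0 < k) :
    ∃ (V : Type), Finite V ∧ Nonempty V ∧ ∃ Adj : V → V → Prop,
      (∀ v, 2 * k - 2 ≤ {u | Adj v u}.ncard) ∧ ¬ HasDisjointCycles Adj k := by
  refine ⟨Fin (2 * k - 1), Finite.of_fintype _, ⟨⟨0, by omega⟩⟩,
    (fun v u => v ≠ u), ?_, ?_⟩
  · intro v
    have hset : {u : Fin (2 * k - 1) | v ≠ u} = {v}ᶜ := by
      ext u; simp [eq_comm]
    have h := Set.ncard_add_ncard_compl ({v} : Set (Fin (2 * k - 1)))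
    rw [hset]
    have h1 : ({v} : Set (Fin (2 * k - 1))).ncard = 1 := Set.ncard_singleton v
    have h2 : Nat.card (Fin (2 * k - 1)) = 2 * k - 1 := by simp
    omega
  · rintro ⟨c, hcyc, hdisj⟩
    -- each cycle has length ≥ 2 (no loops in this digraph)
    have hlen : ∀ i, 2 ≤ (c i).length := by
      intro i
      obtain ⟨hne, hnd, _, hlast⟩ := hcyc i
      rcases hl : c i with _ | ⟨a, l⟩
      · rw [hl] at hne; exact absurd rfl hne
      · rcases l with _ | ⟨b, l⟩
        · rw [hl] at hlast
          exact absurd (hlast a (by simp) a (by simp)) (by simp)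
        · simp
    have hdisj' : ∀ i j : Fin k, i ≠ j →
        Disjoint ((c i).toFinset) ((c j).toFinset) := by
      intro i j hij
      rw [Finset.disjoint_left]
      intro x hx hx'
      exact hdisj hij x (List.mem_toFinset.mp hx) (List.mem_toFinset.mp hx')
    have hcard' := Finset.card_biUnion (s := (Finset.univ : Finset (Fin k)))
      (t := fun i => (c i).toFinset) (fun i _ j _ h => hdisj' i j h)
    have hcard : (Finset.univ.biUnion fun i => (c i).toFinset).card
        = ∑ i : Fin k, ((c i).toFinset).card := by simpa using hcard'
    have hle : (Finset.univ.biUnion fun i => (c i).toFinset).card ≤ 2 * k - 1 := by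
      calc (Finset.univ.biUnion fun i => (c i).toFinset).card
          ≤ (Finset.univ : Finset (Fin (2 * k - 1))).card := Finset.card_le_univ _
        _ = 2 * k - 1 := by simp
    have hge : 2 * k ≤ ∑ i : Fin k, ((c i).toFinset).card := by
      calc 2 * k = ∑ _i : Fin k, 2 := by simp [mul_comm]
        _ ≤ ∑ i : Fin k, ((c i).toFinset).card := by
            apply Finset.sum_le_sum
            intro i _
            rw [List.toFinset_card_of_nodup (hcyc i).2.1]
            exact hlen i
    omega
end

section
/- Every digraph in which every vertex has out-degree at least 3 contains 2 pairwise vertex-disjoint directed cycles (the upper bound f(2) ≤ 3). -/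
open List

section Helpers
variable {V : Type} {R S : V → V → Prop}

theorem isCycle_mono (h : ∀ a b, R a b → S a b) {c : List V} (hc : IsCycle R c) :
    IsCycle S c := by
  obtain ⟨h1, h2, h3, h4⟩ := hc
  exact ⟨h1, h2, h3.imp h, fun x hx y hy => h _ _ (h4 x hx y hy)⟩

theorem isCycle_reverse_of_flip {c : List V} (hc : IsCycle (flip R) c) :
    IsCycle R c.reverse := by
  obtain ⟨h1, h2, h3, h4⟩ := hc
  refine ⟨by simpa, by simpa, ?_, ?_⟩
  · rw [List.Chain', List.isChain_reverse]; exact h3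
  · intro x hx y hy
    rw [List.getLast?_reverse] at hx
    rw [List.head?_reverse] at hy
    exact h4 y hy x hx

theorem chain'_imp_tail :
    ∀ {l : List V}, Chain' R l → (∀ a, ∀ b ∈ l.tail, R a b → S a b) → Chain' S l := by
  intro l
  induction l with
  | nil => intro _ _; exact List.isChain_nil
  | cons a l ih =>
    intro hch hcond
    cases l with
    | nil => exact List.isChain_singleton a
    | cons b l2 =>
      rw [List.Chain', List.isChain_cons_cons] at hch ⊢
      refine ⟨hcond a b (by simp) hch.1, ih hch.2 ?_⟩
      intro a' b' hb' h
      exact hcond a' b' (by simp at hb' ⊢; right; exact hb') h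

theorem isCycle_rotate_single {a : V} {l : List V} (h : IsCycle R (a :: l)) :
    IsCycle R (l ++ [a]) := by
  obtain ⟨-, h2, h3, h4⟩ := h
  cases l with
  | nil => exact ⟨by simp, by simpa using h2, by simpa using h3, by simpa using h4⟩
  | cons b l' =>
    refine ⟨by simp, ?_, ?_, ?_⟩
    · exact ((List.perm_append_singleton a (b :: l')).nodup_iff).mpr h2
    · rw [List.Chain', List.isChain_append]
      refine ⟨h3.tail, List.isChain_singleton a, ?_⟩
      intro x hx y hy
      simp only [head?_cons, Option.mem_def, Option.some.injEq] at hy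
      subst hy
      exact h4 x (by simpa using hx) a rfl
    · intro x hx y hy
      rw [List.getLast?_concat] at hx
      simp only [Option.mem_def, Option.some.injEq] at hx
      subst hx
      have : R a b := (List.isChain_cons_cons.mp h3).1
      have hy' : b = y := by simpa using hy
      subst hy'; exact this

theorem isCycle_rotate {b : V} :
    ∀ {s t : List V}, IsCycle R (s ++ b :: t) → IsCycle R (b :: (t ++ s)) := by
  intro s
  induction s with
  | nil => intro t h; simpa using h
  | cons a s' ih =>
    intro t h
    have h1 : IsCycle R ((s' ++ b :: t) ++ 

 [a]) := isCycle_rotate_single (by simpa using h)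
    have h2 : IsCycle R (s' ++ b :: (t ++ [a])) := by
      simpa [List.append_assoc] using h1
    have h3 := ih h2
    simpa [List.append_assoc] using h3

end Helpers

section Helpers2
variable {V : Type} {R : V → V → Prop}

theorem exists_cycle_of_rev_chain [Finite V] (x : ℕ → V) (h : ∀ k, R (x (k + 1)) (x k)) :
    ∃ c, IsCycle R c ∧ ∀ v ∈ c, ∃ k, v = x k := by
  classical
  have hrep : ∃ j, ∃ i, i < j ∧ x i = x j := by
    obtain ⟨a, b, hab, he⟩ := Finite.exists_ne_map_eq_of_infinite x
    rcases hab.lt_or_gt with h' | h'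
    · exact ⟨b, a, h', he⟩
    · exact ⟨a, b, h', he.symm⟩
  let J := Nat.find hrep
  obtain ⟨i, hiJ, hxiJ⟩ : ∃ i, i < J ∧ x i = x J := Nat.find_spec hrep
  have hinj : ∀ a b, a < b → b < J → x a ≠ x b := by
    intro a b hab hbJ he
    exact Nat.find_min hrep hbJ ⟨a, hab, he⟩
  obtain ⟨L, hL⟩ : ∃ L, J - i = L + 1 := ⟨J - i - 1, by omega⟩
  refine ⟨(List.range (L + 1)).map (fun t => x (J - 1 - t)), ⟨?_, ?_, ?_, ?_⟩, ?_⟩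
  · simp
  · refine List.nodup_range.map_on ?_
    intro t ht s hs he
    simp only [List.mem_range] at ht hs
    by_contra hne
    rcases Nat.lt_or_ge t s with h' | h'
    · exact hinj (J - 1 - s) (J - 1 - t) (by omega) (by omega) (by rw [he])
    · have h'' : s < t := by omega
      exact hinj (J - 1 - t) (J - 1 - s) (by omega) (by omega) (by rw [he])
  · rw [List.Chain', List.isChain_map, List.isChain_range_succ]
    intro m hm
    have : J - 1 - m = (J - 1 - (m + 1)) + 1 := by omega
    rw [this]
    exact h _
  · intro a ha y hy
    rw [List.getLast?_map] at ha
    rw [List.range_succ, List.getLast?_concat] at ha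
    simp only [Option.map_some, Option.mem_def, Option.some.injEq] at ha
    have hy' : y = x (J - 1 - 0) := by
      rw [List.head?_map] at hy
      have : (List.range (L + 1)).head? = some 0 := by
        rw [List.range_succ_eq_map]; rfl
      rw [this] at hy
      simpa using hy.symm
    have hLi : J - 1 - L = i := by omega
    subst ha
    rw [hLi, hy', hxiJ]
    have : J = (J - 1 - 0) + 1 := by omega
    rw [this]
    exact h _
  · intro v hv
    simp only [List.mem_map, List.mem_range] at hv
    obtain ⟨t, -, rfl⟩ := hv
    exact ⟨_, rfl⟩

theorem exists_cycle_in_set [Finite V] {A : Set V} (hA : A.Nonempty)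
    (h : ∀ a ∈ A, ∃ b ∈ A, R a b) :
    ∃ c, IsCycle R c ∧ ∀ v ∈ c, v ∈ A := by
  classical
  obtain ⟨x₀, hx₀⟩ := hA
  let T := {p : V // p ∈ A}
  haveI : Finite T := Subtype.finite
  let g : T → T := fun p => ⟨(h p.1 p.2).choose, (h p.1 p.2).choose_spec.1⟩
  have hg : ∀ p : T, R p.1 (g p).1 := fun p => (h p.1 p.2).choose_spec.2
  let x : ℕ → V := fun k => (g^[k] ⟨x₀, hx₀⟩).1
  have hchain : ∀ k, (flip R) (x (k + 1)) (x k) := by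
    intro k
    show R (x k) (x (k + 1))
    have : x (k + 1) = (g (g^[k] ⟨x₀, hx₀⟩)).1 := by
      show (g^[k+1] ⟨x₀, hx₀⟩).1 = _
      rw [Function.iterate_succ_apply']
    rw [this]
    exact hg _
  obtain ⟨c, hc, hmem⟩ := exists_cycle_of_rev_chain (R := flip R) x hchain
  refine ⟨c.reverse, isCycle_reverse_of_flip hc, ?_⟩
  intro v hv
  rw [List.mem_reverse] at hv
  obtain ⟨k, rfl⟩ := hmem v hv
  exact (g^[k] ⟨x₀, hx₀⟩).2

end Helpers2

section Helpers3
variable {V : Type} {R : V → V → Prop}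

theorem chain'_pred : ∀ {l : List V} {a b : V}, Chain' R (a :: l) → b ∈ l →
    ∃ u ∈ a :: l, R u b := by
  intro l
  induction l with
  | nil => intro a b _ hb; cases hb
  | cons c l' ih =>
    intro a b hch hb
    rw [List.Chain', List.isChain_cons_cons] at hch
    rcases List.mem_cons.mp hb with rfl | hb'
    · exact ⟨a, by simp, hch.1⟩
    · obtain ⟨u, hu, hR⟩ := ih hch.2 hb'
      exact ⟨u, by simp at hu ⊢; tauto, hR⟩

theorem exists_pred_of_mem_cycle {c : List V} (hc : IsCycle R c) {b : V} (hb : b ∈ c) :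
    ∃ a ∈ c, R a b := by
  obtain ⟨hne, -, hch, hwr⟩ := hc
  cases c with
  | nil => cases hb
  | cons h0 t0 =>
    rcases List.mem_cons.mp hb with heq | hb'
    · subst heq
      exact ⟨(b :: t0).getLast (by simp), List.getLast_mem _,
        hwr _ (List.getLast?_eq_getLast (by simp)) b rfl⟩
    · exact chain'_pred hch hb'

theorem three_le_length_of_cycle {c : List V} (hc : IsCycle R c)
    (hloop : ∀ x, ¬R x x) (hdig : ∀ x y, R x y → ¬R y x) : 3 ≤ c.length := by
  obtain ⟨hne, hnd, hch, hwr⟩ := hc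
  match c, hne with
  | [a], _ =>
    exact absurd (hwr a rfl a rfl) (hloop a)
  | [a, b], _ =>
    have h1 : R a b := (List.isChain_cons_cons.mp hch).1
    have h2 : R b a := hwr b rfl a rfl
    exact absurd h2 (hdig a b h1)
  | a :: b :: d :: l, _ => simp

theorem hdc2 {c1 c2 : List V} (h1 : IsCycle R c1) (h2 : IsCycle R c2)
    (hd : ∀ x, x ∈ c1 → x ∉ c2) : HasDisjointCycles R 2 := by
  refine ⟨![c1, c2], ?_, ?_⟩
  · intro i; fin_cases i <;> simpa
  · intro i j hij
    fin_cases i <;> fin_cases j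
    · exact absurd rfl hij
    · simpa using hd
    · simpa using fun x hx2 hx1 => hd x hx1 hx2
    · exact absurd rfl hij

theorem hdc_mono {S : V → V → Prop} (h : ∀ a b, R a b → S a b)
    (hd : HasDisjointCycles R 2) : HasDisjointCycles S 2 := by
  obtain ⟨c, hc, hp⟩ := hd
  exact ⟨c, fun i => isCycle_mono h (hc i), hp⟩

theorem exists_mem_ne_ne {s : Set V} (hfin : s.Finite) (h3 : 3 ≤ s.ncard) (a b : V) :
    ∃ x ∈ s, x ≠ a ∧ x ≠ b := by
  have h1 : s.ncard ≤ (s \ {a, b}).ncard + ({a, b} : Set V).ncard :=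
    Set.ncard_le_ncard_diff_add_ncard s {a, b} (Set.toFinite _)
  have h2 : ({a, b} : Set V).ncard ≤ 2 := by
    apply le_trans (Set.ncard_insert_le _ _)
    simp
  have h4 : 1 ≤ (s \ {a, b}).ncard := by omega
  obtain ⟨x, hx⟩ := Set.nonempty_of_ncard_ne_zero (s := s \ {a, b}) (by omega)
  refine ⟨x, hx.1, ?_, ?_⟩
  · intro he; apply hx.2; simp [he]
  · intro he; apply hx.2; simp [he]

end Helpers3

section Lift
variable {V : Type} {Adj : V → V → Prop}

/-- The surgery relation on `V \ {v}`: delete `v`, and give every in-neighbour of `v`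
an arc to the fixed target `c₀`. -/
def AdjExt (Adj : V → V → Prop) (v c₀ : V) : {x : V // x ≠ v} → {x : V // x ≠ v} → Prop :=
  fun a b => Adj a.1 b.1 ∨ (Adj a.1 v ∧ b.1 = c₀)

theorem lift_cycle {v c₀ : V} (hvc : Adj v c₀) (hne : c₀ ≠ v) (Z : List {x : V // x ≠ v})
    (hZ : IsCycle (AdjExt Adj v c₀) Z) :
    ∃ l : List V, IsCycle Adj l ∧ (∀ x ∈ l, x = v ∨ x ∈ Z.map Subtype.val) ∧
      (v ∈ l → c₀ ∈ Z.map Subtype.val) := by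
  classical
  by_cases hmem : (⟨c₀, hne⟩ : {x : V // x ≠ v}) ∈ Z
  · obtain ⟨s, t, heq⟩ := List.append_of_mem hmem
    subst heq
    have hperm : (((⟨c₀, hne⟩ : {x : V // x ≠ v}) :: (t ++ s)).map Subtype.val).Perm
        ((s ++ (⟨c₀, hne⟩ : {x : V // x ≠ v}) :: t).map Subtype.val) := by
      refine List.Perm.map _ ?_
      exact ((List.perm_append_comm).cons _).trans List.perm_middle.symm
    have hrot : IsCycle (AdjExt Adj v c₀) ((⟨c₀, hne⟩ : {x : V // x ≠ v}) :: (t ++ s)) :=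
      isCycle_rotate hZ
    obtain ⟨hne', hnd, hch, hwr⟩ := hrot
    have hnotin : (⟨c₀, hne⟩ : {x : V // x ≠ v}) ∉ t ++ s := (List.nodup_cons.mp hnd).1
    have hch2 : Chain' (fun a b : {x : V // x ≠ v} => Adj a.1 b.1)
        ((⟨c₀, hne⟩ : {x : V // x ≠ v}) :: (t ++ s)) := by
      refine chain'_imp_tail hch ?_
      intro a b hb hab
      simp only [List.tail_cons] at hb
      rcases hab with h | h
      · exact h
      · exfalso
        have hbc : b = ⟨c₀, hne⟩ := Subtype.ext h.2
        rw [hbc] at hb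
        exact hnotin hb
    have hchmap : Chain' Adj (((⟨c₀, hne⟩ : {x : V // x ≠ v}) :: (t ++ s)).map Subtype.val) :=
      (List.isChain_map _).mpr hch2
    have hlastmem := List.getLast_mem (l := (⟨c₀, hne⟩ : {x : V // x ≠ v}) :: (t ++ s)) (by simp)
    set u : {x : V // x ≠ v} := ((⟨c₀, hne⟩ : {x : V // x ≠ v}) :: (t ++ s)).getLast (by simp)
      with hu
    have hwr' : AdjExt Adj v c₀ u ⟨c₀, hne⟩ :=
      hwr u (List.getLast?_eq_getLast (by simp)) _ rfl
    have hmapnd : (((⟨c₀, hne⟩ : {x : V // x ≠ v}) :: (t ++ s)).map Subtype.val).Nodup :=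
      hnd.map Subtype.val_injective
    have hmapne : ((⟨c₀, hne⟩ : {x : V // x ≠ v}) :: (t ++ s)).map Subtype.val ≠ [] := by simp
    have hlast? : (((⟨c₀, hne⟩ : {x : V // x ≠ v}) :: (t ++ s)).map Subtype.val).getLast?
        = some u.1 := by
      rw [List.getLast?_map, List.getLast?_eq_getLast (by simp)]
      rfl
    rcases hwr' with hreal | hnew
    · -- the wrap arc is a real arc: the rotated mapped list is already a cycle in `Adj`
      refine ⟨((⟨c₀, hne⟩ : {x : V // x ≠ v}) :: (t ++ s)).map Subtype.val,
        ⟨hmapne, hmapnd, hchmap, ?_⟩, ?_, ?_⟩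
      · intro x hx y hy
        rw [hlast?] at hx
        simp only [Option.mem_def, Option.some.injEq] at hx hy
        subst hx
        have : y = c₀ := by simpa using hy.symm
        subst this
        exact hreal
      · intro x hx
        right
        exact hperm.mem_iff.mp hx
      · intro hv
        exfalso
        obtain ⟨w, -, hw⟩ := List.mem_map.mp hv
        exact w.2 hw
    · -- the wrap arc is a new arc: insert `v` before `c₀`
      refine ⟨v :: ((⟨c₀, hne⟩ : {x : V // x ≠ v}) :: (t ++ s)).map Subtype.val,
        ⟨by simp, ?_, ?_, ?_⟩, ?_, ?_⟩
      · rw [List.nodup_cons]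
        constructor
        · intro hv
          obtain ⟨w, -, hw⟩ := List.mem_map.mp hv
          exact w.2 hw
        · exact hmapnd
      · rw [List.map_cons, List.Chain', List.isChain_cons_cons]
        exact ⟨hvc, by rw [List.map_cons] at hchmap; exact hchmap⟩
      · intro x hx y hy
        rw [List.map_cons, List.getLast?_cons_cons] at hx
        rw [← List.map_cons] at hx
        rw [hlast?] at hx
        simp only [Option.mem_def, Option.some.injEq, List.head?_cons] at hx hy
        subst hx
        have : y = v := hy.symm
        subst this
        exact hnew.1
      · intro x hx
        rcases List.mem_cons.mp hx with rfl | hx'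
        · exact Or.inl rfl
        · exact Or.inr (hperm.mem_iff.mp hx')
      · intro _
        refine List.mem_map.mpr ⟨⟨c₀, hne⟩, ?_, rfl⟩
        simp
  · -- `c₀` is not on the cycle: every arc is a real arc
    obtain ⟨hne', hnd, hch, hwr⟩ := hZ
    have hch2 : Chain' (fun a b : {x : V // x ≠ v} => Adj a.1 b.1) Z := by
      refine chain'_imp_tail hch ?_
      intro a b hb hab
      rcases hab with h | h
      · exact h
      · exfalso
        have hbc : b = (⟨c₀, hne⟩ : {x : V // x ≠ v}) := Subtype.ext h.2
        exact hmem (by rw [← hbc]; exact List.mem_of_mem_tail hb)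
    cases Z with
    | nil => exact absurd rfl hne'
    | cons z0 Z' =>
      refine ⟨(z0 :: Z').map Subtype.val, ⟨by simp, hnd.map Subtype.val_injective,
        (List.isChain_map _).mpr hch2, ?_⟩, ?_, ?_⟩
      · intro x hx y hy
        rw [List.getLast?_map, List.getLast?_eq_getLast (by simp)] at hx
        simp only [Option.map_some, Option.mem_def, Option.some.injEq, List.map_cons,
          List.head?_cons] at hx hy
        subst hx
        have hwr2 := hwr _ (List.getLast?_eq_getLast (by simp)) z0 rfl
        rcases hwr2 with h | h
        · rw [← hy]; exact h
        · exfalso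
          have hzc : z0 = (⟨c₀, hne⟩ : {x : V // x ≠ v}) := Subtype.ext h.2
          exact hmem (by rw [← hzc]; exact List.mem_cons_self)
      · intro x hx
        exact Or.inr hx
      · intro hv
        exfalso
        obtain ⟨w, -, hw⟩ := List.mem_map.mp hv
        exact w.2 hw

end Lift

/-- Deleting a single arc. -/
def AdjDel {V : Type} (Adj : V → V → Prop) (v w₀ : V) : V → V → Prop :=
  fun a b => Adj a b ∧ ¬(a = v ∧ b = w₀)

section Main
open Finset

theorem key : ∀ (N : ℕ), ∀ (V : Type) [Fintype V] [Nonempty V], ∀ (Adj : V → V → Prop),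
    Fintype.card V * (Fintype.card V ^ 2 + 1) + {p : V × V | Adj p.1 p.2}.ncard ≤ N →
    (∀ v, 3 ≤ {u | Adj v u}.ncard) → HasDisjointCycles Adj 2 := by
  intro N
  induction N with
  | zero =>
    intro V _ _ Adj hμ _
    exfalso
    have h1 : 0 < Fintype.card V := Fintype.card_pos
    have h2 : 0 < Fintype.card V * (Fintype.card V ^ 2 + 1) := by positivity
    omega
  | succ N ih =>
    intro V instF instN Adj hμ hdeg
    classical
    by_contra hcon
    -- Step 2 : no loops
    have hloop : ∀ x, ¬Adj x x := by
      intro u hu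
      obtain ⟨w, hw, hwu, -⟩ := exists_mem_ne_ne (Set.toFinite _) (hdeg u) u u
      have hS : ∀ a ∈ {x : V | x ≠ u}, ∃ b ∈ {x : V | x ≠ u}, Adj a b := by
        intro a _
        obtain ⟨y, hy, hyu, -⟩ := exists_mem_ne_ne (Set.toFinite _) (hdeg a) u u
        exact ⟨y, hyu, hy⟩
      obtain ⟨c2, hc2, hc2mem⟩ := exists_cycle_in_set (A := {x : V | x ≠ u}) ⟨w, hwu⟩ hS
      apply hcon
      refine hdc2 (c1 := [u]) ⟨by simp, by simp, List.isChain_singleton u, by simpa using hu⟩ hc2 ?_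
      intro x hx hx2
      have hxu : x = u := by simpa using hx
      exact (hc2mem x hx2) hxu
    -- Step 3 : no digons
    have hdig : ∀ u w, Adj u w → ¬Adj w u := by
      intro u w huw hwu
      have hne : u ≠ w := by rintro rfl; exact hloop u huw
      have hS : ∀ a ∈ {x : V | x ≠ u ∧ x ≠ w}, ∃ b ∈ {x : V | x ≠ u ∧ x ≠ w}, Adj a b := by
        intro a _
        obtain ⟨y, hy, hyu, hyw⟩ := exists_mem_ne_ne (Set.toFinite _) (hdeg a) u w
        exact ⟨y, ⟨hyu, hyw⟩, hy⟩
      obtain ⟨y, hy, hyu, hyw⟩ := exists_mem_ne_ne (Set.toFinite _) (hdeg u) u w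
      obtain ⟨c2, hc2, hc2mem⟩ :=
        exists_cycle_in_set (A := {x : V | x ≠ u ∧ x ≠ w}) ⟨y, hyu, hyw⟩ hS
      apply hcon
      refine hdc2 (c1 := [u, w]) ⟨by simp, by simp [hne], ?_, ?_⟩ hc2 ?_
      · simp [List.Chain', List.isChain_cons_cons, huw]
      · intro x hx y' hy'
        have hx' : w = x := by simpa using hx
        have hy'' : u = y' := by simpa using hy'
        subst hx'; subst hy''; exact hwu
      · intro x hx hx2
        obtain ⟨h1, h2⟩ := hc2mem x hx2
        rcases by simpa using hx with rfl | rfl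
        · exact h1 rfl
        · exact h2 rfl
    -- Finset neighbourhoods
    have hncard : ∀ v : V, {u | Adj v u}.ncard = (Finset.univ.filter (fun u => Adj v u)).card := by
      intro v
      rw [← Set.ncard_coe_finset]
      congr 1
      ext u
      simp
    have hdegF : ∀ v : V, 3 ≤ (Finset.univ.filter (fun u => Adj v u)).card := by
      intro v; rw [← hncard]; exact hdeg v
    have harc1 : 1 ≤ {p : V × V | Adj p.1 p.2}.ncard := by
      obtain ⟨v⟩ := instN
      obtain ⟨w, hw, -, -⟩ := exists_mem_ne_ne (Set.toFinite _) (hdeg v) v v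
      have : ((v, w) : V × V) ∈ {p : V × V | Adj p.1 p.2} := hw
      have hne0 : {p : V × V | Adj p.1 p.2}.Nonempty := ⟨_, this⟩
      rw [Nat.one_le_iff_ne_zero]
      exact fun h0 => (Set.not_nonempty_empty) (by
        rwa [← (Set.ncard_eq_zero (Set.toFinite _)).mp h0])
    -- Step 4 : every out-degree is exactly 3
    have hout3 : ∀ v : V, (Finset.univ.filter (fun u => Adj v u)).card = 3 := by
      intro v
      by_contra hv
      have h4 : 4 ≤ (Finset.univ.filter (fun u => Adj v u)).card := by
        have := hdegF v; omega
      obtain ⟨w₀, hw₀⟩ : ∃ w₀, w₀ ∈ Finset.univ.filter (fun u => Adj v u) :=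
        Finset.card_pos.mp (by omega)
      have hvw₀ : Adj v w₀ := by simpa using hw₀
      have hE2 : {p : V × V | AdjDel Adj v w₀ p.1 p.2}
          = {p : V × V | Adj p.1 p.2} \ {(v, w₀)} := by
        ext ⟨x, y⟩
        simp only [Set.mem_setOf_eq, Set.mem_diff, Set.mem_singleton_iff, Prod.mk.injEq, AdjDel]
      have hE2c : {p : V × V | AdjDel Adj v w₀ p.1 p.2}.ncard
          = {p : V × V | Adj p.1 p.2}.ncard - 1 := by
        rw [hE2]
        exact Set.ncard_diff_singleton_of_mem hvw₀
      have hdeg2 : ∀ x : V, 3 ≤ {u | AdjDel Adj v w₀ x u}.ncard := by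
        intro x
        by_cases hx : x = v
        · subst hx
          have heq : {u | AdjDel Adj x w₀ x u} = {u | Adj x u} \ {w₀} := by
            ext u
            simp only [AdjDel, Set.mem_setOf_eq, Set.mem_diff, Set.mem_singleton_iff]
            tauto
          rw [heq, Set.ncard_diff_singleton_of_mem
            (show w₀ ∈ {u | Adj x u} from hvw₀), hncard]
          omega
        · have heq : {u | AdjDel Adj v w₀ x u} = {u | Adj x u} := by
            ext u; simp [AdjDel]; tauto
          rw [heq]
          exact hdeg x
      apply hcon
      refine hdc_mono (fun a b (h : AdjDel Adj v w₀ a b) => h.1) ?_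
      refine ih V (AdjDel Adj v w₀) ?_ hdeg2
      rw [hE2c]
      omega
    -- Step 5 : the domination property
    have hclub : ∀ p q, Adj p q → ∃ u, Adj u p ∧ Adj u q := by
      by_contra hcl
      push_neg at hcl
      obtain ⟨v, c₀, hvc, hc₀⟩ := hcl
      have hnec : c₀ ≠ v := fun h => hloop v (h ▸ hvc)
      haveI : Nonempty {x : V // x ≠ v} := ⟨⟨c₀, hnec⟩⟩
      have hdeg' : ∀ a : {x : V // x ≠ v}, 3 ≤ {b | AdjExt Adj v c₀ a b}.ncard := by
        intro a
        have himg : Subtype.val '' {b : {x : V // x ≠ v} | AdjExt Adj v c₀ a b}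
            = {u : V | u ≠ v ∧ (Adj a.1 u ∨ (Adj a.1 v ∧ u = c₀))} := by
          ext u
          constructor
          · rintro ⟨w, hw, rfl⟩
            exact ⟨w.2, hw⟩
          · rintro ⟨h1, h2⟩
            exact ⟨⟨u, h1⟩, h2, rfl⟩
        have hcardeq : {b : {x : V // x ≠ v} | AdjExt Adj v c₀ a b}.ncard
            = {u : V | u ≠ v ∧ (Adj a.1 u ∨ (Adj a.1 v ∧ u = c₀))}.ncard := by
          rw [← himg, Set.ncard_image_of_injective _ Subtype.val_injective]
        rw [hcardeq]
        by_cases hav : Adj a.1 v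
        · have heq : {u : V | u ≠ v ∧ (Adj a.1 u ∨ (Adj a.1 v ∧ u = c₀))}
              = insert c₀ ({u | Adj a.1 u} \ {v}) := by
            ext u
            simp only [Set.mem_setOf_eq, Set.mem_insert_iff, Set.mem_diff, Set.mem_singleton_iff]
            constructor
            · rintro ⟨h1, h2 | h2⟩
              · exact Or.inr ⟨h2, h1⟩
              · exact Or.inl h2.2
            · rintro (rfl | ⟨h1, h2⟩)
              · exact ⟨hnec, Or.inr ⟨hav, rfl⟩⟩
              · exact ⟨h2, Or.inl h1⟩
          rw [heq, Set.ncard_insert_of_notMem (by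
              rintro ⟨hc, -⟩
              exact hc₀ a.1 hav hc) (Set.toFinite _),
            Set.ncard_diff_singleton_of_mem (show v ∈ {u | Adj a.1 u} from hav)]
          have := hdeg a.1
          omega
        · have heq : {u : V | u ≠ v ∧ (Adj a.1 u ∨ (Adj a.1 v ∧ u = c₀))} = {u | Adj a.1 u} := by
            ext u
            simp only [Set.mem_setOf_eq]
            constructor
            · rintro ⟨h1, h2 | h2⟩
              · exact h2
              · exact absurd h2.1 hav
            · intro h
              refine ⟨?_, Or.inl h⟩
              rintro rfl
              exact hav h
          rw [heq]; exact hdeg a.1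
      have hcW : Fintype.card {x : V // x ≠ v} = Fintype.card V - 1 := by
        simp [Fintype.card_subtype_compl, Fintype.card_subtype_eq]
      have hn2 : 2 ≤ Fintype.card V := by
        haveI : Nontrivial V := ⟨⟨c₀, v, hnec⟩⟩
        exact Fintype.one_lt_card
      have harcW : {p : {x : V // x ≠ v} × {x : V // x ≠ v} | AdjExt Adj v c₀ p.1 p.2}.ncard
          ≤ (Fintype.card V - 1) * (Fintype.card V - 1) := by
        calc {p : {x : V // x ≠ v} × {x : V // x ≠ v} | AdjExt Adj v c₀ p.1 p.2}.ncard
            ≤ (Set.univ : Set ({x : V // x ≠ v} × {x : V // x ≠ v})).ncard :=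
              Set.ncard_le_ncard (Set.subset_univ _) Set.finite_univ
          _ = (Fintype.card V - 1) * (Fintype.card V - 1) := by
              rw [Set.ncard_univ, Nat.card_eq_fintype_card, Fintype.card_prod, hcW]
      have hμ' : Fintype.card {x : V // x ≠ v} * (Fintype.card {x : V // x ≠ v} ^ 2 + 1)
          + {p : {x : V // x ≠ v} × {x : V // x ≠ v} | AdjExt Adj v c₀ p.1 p.2}.ncard ≤ N := by
        have hmain : (Fintype.card V - 1) * ((Fintype.card V - 1) ^ 2 + 1)
            + (Fintype.card V - 1) * (Fintype.card V - 1) + 1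
            ≤ Fintype.card V * (Fintype.card V ^ 2 + 1) := by
          obtain ⟨k, hk⟩ : ∃ k, Fintype.card V = k + 2 := ⟨Fintype.card V - 2, by omega⟩
          rw [hk]
          have h2 : k + 2 - 1 = k + 1 := by omega
          rw [h2]
          nlinarith [k.zero_le, sq_nonneg k]
        rw [hcW]
        omega
      have hkey := ih {x : V // x ≠ v} (AdjExt Adj v c₀) hμ' hdeg'
      obtain ⟨Zf, hZc, hZp⟩ := hkey
      have hd01 : ∀ y, y ∈ Zf 0 → y ∉ Zf 1 := hZp (show (0 : Fin 2) ≠ 1 by decide)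
      obtain ⟨l1, hl1, hl1m, hl1v⟩ := lift_cycle hvc hnec (Zf 0) (hZc 0)
      obtain ⟨l2, hl2, hl2m, hl2v⟩ := lift_cycle hvc hnec (Zf 1) (hZc 1)
      apply hcon
      refine hdc2 hl1 hl2 ?_
      intro x hx1 hx2
      rcases hl1m x hx1 with rfl | hx1'
      · obtain ⟨w1, hw1, hw1e⟩ := List.mem_map.mp (hl1v hx1)
        obtain ⟨w2, hw2, hw2e⟩ := List.mem_map.mp (hl2v hx2)
        have hw12 : w1 = w2 := Subtype.ext (hw1e.trans hw2e.symm)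
        exact hd01 w1 hw1 (hw12 ▸ hw2)
      · rcases hl2m x hx2 with rfl | hx2'
        · obtain ⟨w, -, hw⟩ := List.mem_map.mp hx1'
          exact w.2 hw
        · obtain ⟨w1, hw1, hw1e⟩ := List.mem_map.mp hx1'
          obtain ⟨w2, hw2, hw2e⟩ := List.mem_map.mp hx2'
          have hw12 : w1 = w2 := Subtype.ext (hw1e.trans hw2e.symm)
          exact hd01 w1 hw1 (hw12 ▸ hw2)
    -- Step 6 : for every vertex a cycle inside its in-neighbourhood
    have hZy : ∀ y : V, ∃ c, IsCycle Adj c ∧ ∀ x ∈ c, Adj x y := by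
      intro y
      obtain ⟨w₀, hw₀, -, -⟩ := exists_mem_ne_ne (Set.toFinite _) (hdeg y) y y
      obtain ⟨u₀, hu₀y, -⟩ := hclub y w₀ hw₀
      let g : {p : V // Adj p y} → {p : V // Adj p y} := fun p =>
        ⟨(hclub p.1 y p.2).choose, (hclub p.1 y p.2).choose_spec.2⟩
      have hg : ∀ p : {p : V // Adj p y}, Adj (g p).1 p.1 :=
        fun p => (hclub p.1 y p.2).choose_spec.1
      let x : ℕ → V := fun k => (g^[k] ⟨u₀, hu₀y⟩).1
      have hchain : ∀ k, Adj (x (k + 1)) (x k) := by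
        intro k
        have hit : g^[k + 1] ⟨u₀, hu₀y⟩ = g (g^[k] ⟨u₀, hu₀y⟩) := Function.iterate_succ_apply' g _ _
        show Adj (g^[k + 1] ⟨u₀, hu₀y⟩).1 (g^[k] ⟨u₀, hu₀y⟩).1
        rw [hit]
        exact hg _
      obtain ⟨c, hc, hcm⟩ := exists_cycle_of_rev_chain x hchain
      refine ⟨c, hc, ?_⟩
      intro z hz
      obtain ⟨k, rfl⟩ := hcm z hz
      exact (g^[k] ⟨u₀, hu₀y⟩).2
    -- step 7 : common in-neighbours and n ≤ 7
    have hcommon : ∀ y y' : V, y ≠ y' → ∃ x, Adj x y ∧ Adj x y' := by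
      intro y y' hne'
      obtain ⟨cy, hcy, hcym⟩ := hZy y
      obtain ⟨cy', hcy', hcym'⟩ := hZy y'
      by_contra hno
      push_neg at hno
      apply hcon
      refine hdc2 hcy hcy' ?_
      intro x hx hx'
      exact hno x (hcym x hx) (hcym' x hx')
    have hcard1 : ((Finset.univ : Finset V).offDiag).card
        = Fintype.card V * Fintype.card V - Fintype.card V := by
      rw [Finset.offDiag_card, Finset.card_univ]
    have hn7 : Fintype.card V ≤ 7 := by
      set φ : V × V → V := fun p =>
        if h : ∃ x, Adj x p.1 ∧ Adj x p.2 then h.choose else Classical.arbitrary V with hφ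
      have hsum : ((Finset.univ : Finset V).offDiag).card =
          ∑ x ∈ Finset.univ, (((Finset.univ : Finset V).offDiag).filter (fun p => φ p = x)).card :=
        Finset.card_eq_sum_card_fiberwise (fun p _ => Finset.mem_univ (φ p))
      have hfb : ∀ x : V, (((Finset.univ : Finset V).offDiag).filter (fun p => φ p = x)).card ≤ 6 := by
        intro x
        have hsub : ((Finset.univ : Finset V).offDiag).filter (fun p => φ p = x)
            ⊆ (Finset.univ.filter (fun u => Adj x u)).offDiag := by
          intro p hp
          rw [Finset.mem_filter, Finset.mem_offDiag] at hp
          obtain ⟨⟨-, -, hpne⟩, hpx⟩ := hp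
          have hex : ∃ z, Adj z p.1 ∧ Adj z p.2 := hcommon p.1 p.2 hpne
          rw [hφ] at hpx
          simp only [dif_pos hex] at hpx
          have hspec := hex.choose_spec
          rw [hpx] at hspec
          rw [Finset.mem_offDiag]
          exact ⟨by simp [hspec.1], by simp [hspec.2], hpne⟩
        calc (((Finset.univ : Finset V).offDiag).filter (fun p => φ p = x)).card
            ≤ ((Finset.univ.filter (fun u => Adj x u)).offDiag).card := Finset.card_le_card hsub
          _ = 3 * 3 - 3 := by rw [Finset.offDiag_card, hout3 x]
          _ ≤ 6 := by norm_num
      have hbound : Fintype.card V * Fintype.card V - Fintype.card V ≤ 6 * Fintype.card V := by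
        rw [← hcard1, hsum]
        calc ∑ x ∈ Finset.univ, (((Finset.univ : Finset V).offDiag).filter (fun p => φ p = x)).card
            ≤ ∑ _x ∈ (Finset.univ : Finset V), 6 := Finset.sum_le_sum (fun x _ => hfb x)
          _ = Fintype.card V * 6 := by rw [Finset.sum_const, Finset.card_univ, smul_eq_mul]
          _ ≤ 6 * Fintype.card V := by rw [mul_comm]
      have hpos : 0 < Fintype.card V := Fintype.card_pos
      have h2 : Fintype.card V ≤ Fintype.card V * Fintype.card V :=
        Nat.le_mul_of_pos_left _ hpos
      have h1 : Fintype.card V * Fintype.card V ≤ 7 * Fintype.card V := by omega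
      exact Nat.le_of_mul_le_mul_right h1 hpos
    -- Step 8 : the digraph is a 3-regular tournament on 7 vertices
    have hEFcard : ((Finset.univ : Finset (V × V)).filter (fun p => Adj p.1 p.2)).card
        = 3 * Fintype.card V := by
      rw [Finset.card_eq_sum_card_fiberwise
        (f := Prod.fst) (t := Finset.univ) (fun p _ => Finset.mem_univ p.1)]
      have hfib : ∀ v : V,
          (((Finset.univ : Finset (V × V)).filter (fun p => Adj p.1 p.2)).filter
            (fun p => p.1 = v)).card = 3 := by
        intro v
        have himg : ((Finset.univ : Finset (V × V)).filter (fun p => Adj p.1 p.2)).filter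
            (fun p => p.1 = v) = (Finset.univ.filter (fun u => Adj v u)).image (fun u => (v, u)) := by
          ext ⟨x, y⟩
          simp only [Finset.mem_filter, Finset.mem_univ, true_and, Finset.mem_image]
          constructor
          · rintro ⟨hxy, rfl⟩
            exact ⟨y, hxy, rfl⟩
          · rintro ⟨u, hu, he⟩
            cases he
            exact ⟨hu, rfl⟩
        rw [himg, Finset.card_image_of_injective _
          (fun a b h => by simpa using congrArg Prod.snd h), hout3 v]
      rw [Finset.sum_congr rfl (fun v _ => hfib v), Finset.sum_const, Finset.card_univ,
        smul_eq_mul, mul_comm]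
    have hswapcard : (((Finset.univ : Finset (V × V)).filter
        (fun p => Adj p.1 p.2)).image Prod.swap).card = 3 * Fintype.card V := by
      rw [Finset.card_image_of_injective _ Prod.swap_injective, hEFcard]
    have hdisjEF : Disjoint ((Finset.univ : Finset (V × V)).filter (fun p => Adj p.1 p.2))
        (((Finset.univ : Finset (V × V)).filter (fun p => Adj p.1 p.2)).image Prod.swap) := by
      rw [Finset.disjoint_left]
      intro p hp hp'
      obtain ⟨x, y⟩ := p
      have h1 : Adj x y := by simpa using hp
      rw [Finset.mem_image] at hp'
      obtain ⟨⟨x', y'⟩, hq, he⟩ := hp'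
      have h2 : Adj x' y' := by simpa using hq
      have he1 : y' = x := congrArg Prod.fst he
      have he2 : x' = y := congrArg Prod.snd he
      rw [he1, he2] at h2
      exact hdig x y h1 h2
    have hsubo : ((Finset.univ : Finset (V × V)).filter (fun p => Adj p.1 p.2))
        ∪ (((Finset.univ : Finset (V × V)).filter (fun p => Adj p.1 p.2)).image Prod.swap)
        ⊆ (Finset.univ : Finset V).offDiag := by
      intro p hp
      obtain ⟨x, y⟩ := p
      rw [Finset.mem_union] at hp
      rw [Finset.mem_offDiag]
      refine ⟨Finset.mem_univ _, Finset.mem_univ _, ?_⟩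
      rcases hp with hp | hp
      · have h1 : Adj x y := by simpa using hp
        intro hxy
        have hxy' : x = y := hxy
        subst hxy'
        exact hloop x h1
      · rw [Finset.mem_image] at hp
        obtain ⟨⟨x', y'⟩, hq, he⟩ := hp
        have h2 : Adj x' y' := by simpa using hq
        have he1 : y' = x := congrArg Prod.fst he
        have he2 : x' = y := congrArg Prod.snd he
        rw [he1, he2] at h2
        intro hxy
        have hxy' : x = y := hxy
        subst hxy'
        exact hloop x h2
    have hunioncard : 6 * Fintype.card V ≤ Fintype.card V * Fintype.card V - Fintype.card V := by
      have := Finset.card_le_card hsubo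
      rwa [Finset.card_union_of_disjoint hdisjEF, hEFcard, hswapcard, hcard1,
        show 3 * Fintype.card V + 3 * Fintype.card V = 6 * Fintype.card V by ring] at this
    have hn7' : Fintype.card V = 7 := by
      have hpos : 0 < Fintype.card V := Fintype.card_pos
      have h2 : Fintype.card V ≤ Fintype.card V * Fintype.card V :=
        Nat.le_mul_of_pos_left _ hpos
      have h1 : 7 * Fintype.card V ≤ Fintype.card V * Fintype.card V := by omega
      have h3 : 7 ≤ Fintype.card V := Nat.le_of_mul_le_mul_right h1 hpos
      omega
    have hEq : ((Finset.univ : Finset (V × V)).filter (fun p => Adj p.1 p.2))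
        ∪ (((Finset.univ : Finset (V × V)).filter (fun p => Adj p.1 p.2)).image Prod.swap)
        = (Finset.univ : Finset V).offDiag := by
      apply Finset.eq_of_subset_of_card_le hsubo
      rw [Finset.card_union_of_disjoint hdisjEF, hEFcard, hswapcard, hcard1, hn7']
    have htourn : ∀ x y : V, x ≠ y → Adj x y ∨ Adj y x := by
      intro x y hxy
      have hmem : ((x, y) : V × V) ∈ (Finset.univ : Finset V).offDiag := by
        rw [Finset.mem_offDiag]; exact ⟨Finset.mem_univ _, Finset.mem_univ _, hxy⟩
      rw [← hEq, Finset.mem_union] at hmem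
      rcases hmem with h | h
      · exact Or.inl (by simpa using h)
      · rw [Finset.mem_image] at h
        obtain ⟨⟨x', y'⟩, hq, he⟩ := h
        have h2 : Adj x' y' := by simpa using hq
        have he1 : y' = x := congrArg Prod.fst he
        have he2 : x' = y := congrArg Prod.snd he
        rw [he1, he2] at h2
        exact Or.inr h2
    have hin3 : ∀ y : V, (Finset.univ.filter (fun x => Adj x y)).card = 3 := by
      intro y
      have hdisj2 : Disjoint (Finset.univ.filter (fun u => Adj y u))
          (Finset.univ.filter (fun x => Adj x y)) := by
        rw [Finset.disjoint_left]
        intro z hz hz'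
        exact hdig y z (by simpa using hz) (by simpa using hz')
      have hnotmem : y ∉ (Finset.univ.filter (fun u => Adj y u))
          ∪ (Finset.univ.filter (fun x => Adj x y)) := by
        rw [Finset.mem_union]
        rintro (h | h)
        · exact hloop y (by simpa using h)
        · exact hloop y (by simpa using h)
      have hsplit : (Finset.univ : Finset V) = insert y
          ((Finset.univ.filter (fun u => Adj y u)) ∪ (Finset.univ.filter (fun x => Adj x y))) := by
        ext z
        simp only [Finset.mem_univ, true_iff, Finset.mem_insert, Finset.mem_union,
          Finset.mem_filter, true_and]
        by_cases hz : z = y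
        · exact Or.inl hz
        · rcases htourn y z (fun h => hz h.symm) with h | h
          · exact Or.inr (Or.inl h)
          · exact Or.inr (Or.inr h)
      have hc := congrArg Finset.card hsplit
      rw [Finset.card_univ, hn7', Finset.card_insert_of_notMem hnotmem,
        Finset.card_union_of_disjoint hdisj2, hout3 y] at hc
      omega
    have hZy3 : ∀ y : V, ∃ c, IsCycle Adj c ∧ (∀ x ∈ c, Adj x y) ∧ ∀ x, Adj x y → x ∈ c := by
      intro y
      obtain ⟨c, hc, hcm⟩ := hZy y
      have hlen : 3 ≤ c.length := three_le_length_of_cycle hc hloop hdig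
      have hnd : c.Nodup := hc.2.1
      have hsub : c.toFinset ⊆ Finset.univ.filter (fun x => Adj x y) := by
        intro x hx
        rw [List.mem_toFinset] at hx
        simp only [Finset.mem_filter, Finset.mem_univ, true_and]
        exact hcm x hx
      have hcardc : c.toFinset.card = c.length := List.toFinset_card_of_nodup hnd
      have heqF : c.toFinset = Finset.univ.filter (fun x => Adj x y) :=
        Finset.eq_of_subset_of_card_le hsub (by rw [hin3 y, hcardc]; exact hlen)
      refine ⟨c, hc, hcm, ?_⟩
      intro x hx
      rw [← List.mem_toFinset, heqF]
      simp only [Finset.mem_filter, Finset.mem_univ, true_and]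
      exact hx
    -- Step 9 : endgame
    obtain ⟨y₀⟩ := id instN
    obtain ⟨a, b, c, hab, hac, hbc, habc⟩ := Finset.card_eq_three.mp (hout3 y₀)
    have hya : Adj y₀ a := by
      have : a ∈ Finset.univ.filter (fun u => Adj y₀ u) := by rw [habc]; simp
      simpa using this
    have hyb : Adj y₀ b := by
      have : b ∈ Finset.univ.filter (fun u => Adj y₀ u) := by rw [habc]; simp
      simpa using this
    have hyc : Adj y₀ c := by
      have : c ∈ Finset.univ.filter (fun u => Adj y₀ u) := by rw [habc]; simp
      simpa using this
    have hsink : ∀ t p q : V, Adj y₀ t → Adj y₀ p → Adj y₀ q → p ≠ q →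
        Adj p t → Adj q t → False := by
      intro t p q hyt hyp hyq hpq hpt hqt
      have hpy : y₀ ≠ p := fun h => hloop y₀ (by rw [← h] at hyp; exact hyp)
      have hqy : y₀ ≠ q := fun h => hloop y₀ (by rw [← h] at hyq; exact hyq)
      have hsub : ({y₀, p, q} : Finset V) ⊆ Finset.univ.filter (fun x => Adj x t) := by
        intro z hz
        simp only [Finset.mem_insert, Finset.mem_singleton] at hz
        simp only [Finset.mem_filter, Finset.mem_univ, true_and]
        rcases hz with rfl | rfl | rfl
        · exact hyt
        · exact hpt
        · exact hqt
      have hcard3 : ({y₀, p, q} : Finset V).card = 3 := by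
        rw [Finset.card_insert_of_notMem (by simp [hpy, hqy]),
          Finset.card_insert_of_notMem (by simp [hpq]), Finset.card_singleton]
      have heqF : ({y₀, p, q} : Finset V) = Finset.univ.filter (fun x => Adj x t) :=
        Finset.eq_of_subset_of_card_le hsub (by rw [hin3 t, hcard3])
      obtain ⟨ct, hct, hctm, hctall⟩ := hZy3 t
      have hy₀ct : y₀ ∈ ct := hctall y₀ hyt
      obtain ⟨u, huc, hu⟩ := exists_pred_of_mem_cycle hct hy₀ct
      have humem : u ∈ ({y₀, p, q} : Finset V) := by
        rw [heqF]
        simp only [Finset.mem_filter, Finset.mem_univ, true_and]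
        exact hctm u huc
      simp only [Finset.mem_insert, Finset.mem_singleton] at humem
      rcases humem with rfl | rfl | rfl
      · exact hloop u hu
      · exact hdig y₀ u hyp hu
      · exact hdig y₀ u hyq hu
    have hcyc : ∀ x y z : V, Adj y₀ x → Adj y₀ y → Adj y₀ z → x ≠ y → y ≠ z → x ≠ z →
        Adj x y → Adj y z → Adj z x → False := by
      intro x y z hyx hyy hyz hxy hyz' hxz haxy hayz hazx
      obtain ⟨cy, hcy, hcym⟩ := hZy y₀
      apply hcon
      refine hdc2 (c1 := [x, y, z]) ⟨by simp, by simp [hxy, hyz', hxz], ?_, ?_⟩ hcy ?_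
      · rw [List.Chain', List.isChain_cons_cons, List.isChain_cons_cons]
        exact ⟨haxy, hayz, List.isChain_singleton z⟩
      · intro p hp q hq
        have hp' : z = p := by simpa using hp
        have hq' : x = q := by simpa using hq
        rw [← hp', ← hq']
        exact hazx
      · intro w hw hw2
        have hw' : w = x ∨ w = y ∨ w = z := by simpa using hw
        have hw3 : Adj y₀ w := by rcases hw' with rfl | rfl | rfl <;> assumption
        exact hdig y₀ w hw3 (hcym w hw2)
    rcases htourn a b hab with h1 | h1 <;>
      rcases htourn b c hbc with h2 | h2 <;>
      rcases htourn a c hac with h3 | h3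
    · exact hsink c a b hyc hya hyb hab h3 h2
    · exact hcyc a b c hya hyb hyc hab hbc hac h1 h2 h3
    · exact hsink b a c hyb hya hyc hac h1 h2
    · exact hsink b a c hyb hya hyc hac h1 h2
    · exact hsink c a b hyc hya hyb hab h3 h2
    · exact hsink a b c hya hyb hyc hbc h1 h3
    · exact hcyc a c b hya hyc hyb hac (fun h => hbc h.symm) hab h3 h2 h1
    · exact hsink a b c hya hyb hyc hbc h1 h3

end Main

/-- Every 3-out digraph contains two vertex-disjoint directed cycles: `f(2) ≤ 3`. -/
theorem f_two_le_three (V : Type) [Finite V] [Nonempty V] (Adj : V → V → Prop)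
    (hdeg : ∀ v, 3 ≤ {u | Adj v u}.ncard) :
    HasDisjointCycles Adj 2 := by
  classical
  letI : Fintype V := Fintype.ofFinite V
  exact key (Fintype.card V * (Fintype.card V ^ 2 + 1) + {p : V × V | Adj p.1 p.2}.ncard)
    V Adj le_rfl hdeg
end

section
/- The complete digraph on 3 vertices (with adjacency relation Adj u v ↔ u ≠ v, i.e., a bidirectional edge between every pair of distinct vertices and no loops) is 2-out but does not contain 2 pairwise vertex-disjoint directed cycles; consequently f(2) ≥ 3. -/
lemma cycle_len_two {c : List (Fin 3)} (h : IsCycle (fun u v : Fin 3 => u ≠ v) c) :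
    2 ≤ c.length := by
  obtain ⟨hne, hnd, hch, hlast⟩ := h
  match c with
  | [] => exact absurd rfl hne
  | [a] => exact absurd rfl (hlast a rfl a rfl)
  | a :: b :: t => simp [List.length]

/-- The complete digraph on 3 vertices (adjacency `u ≠ v`) is 2-out but
contains no two vertex-disjoint directed cycles, hence `f(2) ≥ 3`. -/
theorem complete_digraph_three :
    (∀ v : Fin 3, 2 ≤ {u | v ≠ u}.ncard) ∧
    ¬ HasDisjointCycles (fun u v : Fin 3 => u ≠ v) 2 := by
  constructor
  · intro v
    have h : {u : Fin 3 | v ≠ u} = {v + 1, v + 2} := by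
      ext u; fin_cases v <;> fin_cases u <;> simp
    rw [h, Set.ncard_pair (by fin_cases v <;> decide)]
  · rintro ⟨c, hcyc, hdisj⟩
    have h01 := hdisj (i := 0) (j := 1) (by decide)
    have l0 := cycle_len_two (hcyc 0)
    have l1 := cycle_len_two (hcyc 1)
    have hnd : (c 0 ++ c 1).Nodup := by
      rw [List.nodup_append]
      exact ⟨(hcyc 0).2.1, (hcyc 1).2.1, fun x hx y hy hxy => h01 x hx (hxy ▸ hy)⟩
    have hle : (c 0 ++ c 1).length ≤ 3 := by
      have := List.Nodup.length_le_card hnd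
      simpa using this
    rw [List.length_append] at hle
    omega
end

section
/- If for positive integers k and r a (k,r)-critical digraph exists, then r ≥ 2k+1, i.e., r - 1 ≥ 2k. -/
/-- A digraph is `r`-out if every vertex has out-degree at least `r`. -/
def IsROut {V : Type} (Adj : V → V → Prop) (r : ℕ) : Prop :=
  ∀ v, r ≤ {u | Adj v u}.ncard

/-- A digraph `Adj` on a finite nonempty vertex type `V` is `(k,r)`-critical if:
(1) it is `r`-out; (2) it does not contain `k+1` disjoint cycles;
(3) it has the smallest number of vertices subject to (1),(2);
(4) the smallest number of edges subject to (1),(2),(3); and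
(5) every `(r-2)`-out digraph contains `k` disjoint cycles. -/
def IsCritical (k r : ℕ) {V : Type} [Finite V] [Nonempty V] (Adj : V → V → Prop) : Prop :=
  IsROut Adj r ∧
  ¬ HasDisjointCycles Adj (k + 1) ∧
  (∀ (W : Type) [Finite W] [Nonempty W] (B : W → W → Prop),
    IsROut B r → ¬ HasDisjointCycles B (k + 1) → Nat.card V ≤ Nat.card W) ∧
  (∀ (W : Type) [Finite W] [Nonempty W] (B : W → W → Prop),
    IsROut B r → ¬ HasDisjointCycles B (k + 1) → Nat.card W = Nat.card V →
      {p : V × V | Adj p.1 p.2}.ncard ≤ {p : W × W | B p.1 p.2}.ncard) ∧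
  (∀ (W : Type) [Finite W] [Nonempty W] (B : W → W → Prop),
    IsROut B (r - 2) → HasDisjointCycles B k)

/-- If a `(k,r)`-critical digraph exists then `r - 1 ≥ 2k`, i.e. `r ≥ 2k + 1`. -/
theorem critical_r_ge (k r : ℕ) (hk : 0 < k) (hr : 0 < r)
    (V : Type) [Finite V] [Nonempty V] (Adj : V → V → Prop)
    (hc : IsCritical k r Adj) :
    2 * k + 1 ≤ r := by
  by_contra h
  push_neg at h
  have hn : 0 < 2 * k - 1 := by omega
  haveI : Nonempty (Fin (2 * k - 1)) := Fin.pos_iff_nonempty.mp hn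
  set B : Fin (2 * k - 1) → Fin (2 * k - 1) → Prop := fun x y => x ≠ y with hB
  have hrout : IsROut B (r - 2) := by
    intro v
    have hset : {u | B v u} = {v}ᶜ := by
      ext u; simp [hB, eq_comm]
    rw [hset]
    have hcompl := Set.ncard_add_ncard_compl ({v} : Set (Fin (2 * k - 1)))
    simp [Set.ncard_singleton, Nat.card_eq_fintype_card] at hcompl
    omega
  obtain ⟨c, hcyc, hdisj⟩ := hc.2.2.2.2 (Fin (2 * k - 1)) B hrout
  have hlen : ∀ i, 2 ≤ (c i).length := by
    intro i
    obtain ⟨hne, hnd, hch, hlast⟩ := hcyc i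
    by_contra hl
    push_neg at hl
    have h1 : (c i).length = 1 := by
      have := List.length_pos_iff.mpr hne
      omega
    obtain ⟨a, ha⟩ := List.length_eq_one_iff.mp h1
    have := hlast a (by simp [ha]) a (by simp [ha])
    exact this rfl
  have hnodup : ((List.ofFn c).flatten).Nodup := by
    rw [List.nodup_flatten]
    constructor
    · intro l hl
      obtain ⟨i, rfl⟩ := List.mem_ofFn.mp hl
      exact (hcyc i).2.1
    · rw [List.pairwise_ofFn]
      intro i j hij
      exact fun x hx => hdisj hij.ne x hx
  have hle := hnodup.length_le_card
  rw [List.length_flatten] at hle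
  have hsum : ((List.ofFn c).map List.length).sum = ∑ i, (c i).length := by
    rw [List.map_ofFn, List.sum_ofFn]; rfl
  rw [hsum] at hle
  have hge : 2 * k ≤ ∑ i : Fin k, (c i).length := by
    calc 2 * k = ∑ _i : Fin k, 2 := by simp [mul_comm]
    _ ≤ ∑ i, (c i).length := Finset.sum_le_sum fun i _ => hlen i
  simp [Fintype.card_fin] at hle
  omega
end

section
/- A (k,r)-critical digraph contains no loops and no bidirectional edges: for every vertex v, Adj v v fails, and for every pair of distinct vertices u, w, it is not the case that both Adj u w and Adj w u hold. -/
lemma unit_no_cycles (k : ℕ) (hk : 0 < k) :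
    ¬ HasDisjointCycles (fun _ _ : Unit => False) k := by
  rintro ⟨c, hc, -⟩
  obtain ⟨hne, -, -, hlast⟩ := hc ⟨0, hk⟩
  obtain ⟨a, l, hal⟩ := List.exists_cons_of_ne_nil hne
  refine hlast ((c ⟨0, hk⟩).getLast hne) ?_ a ?_
  · rw [List.getLast?_eq_getLast hne]; rfl
  · rw [hal]; rfl

lemma extend_cycles {V : Type} (Adj : V → V → Prop) (k : ℕ) (c₀ : List V)
    (h₀ : IsCycle Adj c₀)
    (h : HasDisjointCycles (fun a b : {x : V // x ∉ c₀} => Adj a.1 b.1) k) :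
    HasDisjointCycles Adj (k + 1) := by
  obtain ⟨c, hc, hd⟩ := h
  refine ⟨Fin.cons c₀ (fun i => (c i).map Subtype.val), ?_, ?_⟩
  · intro i
    induction i using Fin.cases with
    | zero => simpa using h₀
    | succ i =>
      simp only [Fin.cons_succ]
      obtain ⟨hne, hnd, hch, hl⟩ := hc i
      refine ⟨by rw [ne_eq, List.map_eq_nil_iff]; exact hne, hnd.map Subtype.val_injective, ?_, ?_⟩
      · exact (List.isChain_map Subtype.val).mpr hch
      · intro x hx y hy
        rw [List.getLast?_map] at hx
        rw [List.head?_map] at hy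
        simp only [Option.mem_def, Option.map_eq_some_iff] at hx hy
        obtain ⟨x', hx', rfl⟩ := hx
        obtain ⟨y', hy', rfl⟩ := hy
        exact hl x' hx' y' hy'
  · intro i j hij
    induction i using Fin.cases with
    | zero =>
      induction j using Fin.cases with
      | zero => exact absurd rfl hij
      | succ j =>
        intro x hx hx'
        simp only [Fin.cons_succ, List.mem_map] at hx'
        obtain ⟨a, -, rfl⟩ := hx'
        exact a.2 (by simpa using hx)
    | succ i =>
      induction j using Fin.cases with
      | zero =>
        intro x hx hx'
        simp only [Fin.cons_succ, List.mem_map] at hx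
        obtain ⟨a, -, rfl⟩ := hx
        exact a.2 (by simpa using hx')
      | succ j =>
        intro x hx hx'
        simp only [Fin.cons_succ, List.mem_map] at hx hx'
        obtain ⟨a, ha, rfl⟩ := hx
        obtain ⟨b, hb, hba⟩ := hx'
        have hij' : i ≠ j := fun h => hij (by rw [h])
        have : b = a := Subtype.val_injective hba
        exact hd hij' a ha (this ▸ hb)

lemma sub_rout {V : Type} [Finite V] (Adj : V → V → Prop) (r : ℕ)
    (hA : IsROut Adj r) (c₀ : List V) (hlen : c₀.length ≤ 2) :
    IsROut (fun a b : {x : V // x ∉ c₀} => Adj a.1 b.1) (r - 2) := by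
  intro x
  have hsub : {y | Adj x.1 y} ⊆
      (Subtype.val '' {u : {x : V // x ∉ c₀} | Adj x.1 u.1}) ∪ {y | y ∈ c₀} := by
    intro y hy
    by_cases hyc : y ∈ c₀
    · exact Or.inr hyc
    · exact Or.inl ⟨⟨y, hyc⟩, hy, rfl⟩
  have h1 : {y | Adj x.1 y}.ncard ≤
      (Subtype.val '' {u : {x : V // x ∉ c₀} | Adj x.1 u.1}).ncard + {y | y ∈ c₀}.ncard :=
    le_trans (Set.ncard_le_ncard hsub (Set.toFinite _)) (Set.ncard_union_le _ _)
  rw [Set.ncard_image_of_injective _ Subtype.val_injective] at h1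
  have h2 : {y | y ∈ c₀}.ncard ≤ c₀.length := by
    classical
    have he : {y | y ∈ c₀} = ↑c₀.toFinset := by ext y; simp
    rw [he, Set.ncard_coe_finset]
    exact c₀.toFinset_card_le
  have h3 := hA x.1
  show r - 2 ≤ {u : {x : V // x ∉ c₀} | Adj x.1 u.1}.ncard
  omega

/-- A `(k,r)`-critical digraph has no loops and no bidirectional edges. -/
theorem critical_no_loops_no_bidirectional (k r : ℕ) (hk : 0 < k) (hr : 0 < r)
    (V : Type) [Finite V] [Nonempty V] (Adj : V → V → Prop)
    (hc : IsCritical k r Adj) :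
    (∀ v, ¬ Adj v v) ∧ ∀ u w, u ≠ w → ¬ (Adj u w ∧ Adj w u) := by
  obtain ⟨h1, h2, -, -, h5⟩ := hc
  have main : ∀ c₀ : List V, IsCycle Adj c₀ → c₀.length ≤ 2 → False := by
    intro c₀ hcyc hlen
    by_cases hne : Nonempty {x : V // x ∉ c₀}
    · haveI := hne
      exact h2 (extend_cycles Adj k c₀ hcyc
        (h5 _ (fun a b : {x : V // x ∉ c₀} => Adj a.1 b.1) (sub_rout Adj r h1 c₀ hlen)))
    · have hall : ∀ x : V, x ∈ c₀ := by
        intro x; by_contra hx; exact hne ⟨⟨x, hx⟩⟩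
      have hr2 : r ≤ 2 := by
        obtain ⟨v⟩ := ‹Nonempty V›
        have hd := h1 v
        have hsub : {u | Adj v u} ⊆ {y | y ∈ c₀} := fun u _ => hall u
        have hle : {u | Adj v u}.ncard ≤ {y | y ∈ c₀}.ncard :=
          Set.ncard_le_ncard hsub (Set.toFinite _)
        have h2' : {y : V | y ∈ c₀}.ncard ≤ c₀.length := by
          classical
          have he : {y : V | y ∈ c₀} = ↑c₀.toFinset := by ext y; simp
          rw [he, Set.ncard_coe_finset]
          exact c₀.toFinset_card_le
        omega
      have h0 : IsROut (fun _ _ : Unit => False) (r - 2) := by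
        intro _
        omega
      exact unit_no_cycles k hk (h5 Unit (fun _ _ => False) h0)
  constructor
  · intro v hv
    refine main [v] ⟨by simp, by simp, List.isChain_singleton v, ?_⟩ (by simp)
    intro x hx y hy
    simp only [List.getLast?_singleton, List.head?_cons, Option.mem_def,
      Option.some.injEq] at hx hy
    subst hx; subst hy; exact hv
  · rintro u w huw ⟨hab, hba⟩
    refine main [u, w] ⟨by simp, by simp [huw], ?_, ?_⟩ (by simp)
    · exact List.isChain_cons_cons.mpr ⟨hab, List.isChain_singleton w⟩
    · intro x hx y hy
      simp only [List.getLast?_cons_cons, List.getLast?_singleton, List.head?_cons,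
        Option.mem_def, Option.some.injEq] at hx hy
      subst hx; subst hy; exact hba
end

section
/- In a (k,r)-critical digraph, every edge has a witness: for every pair of vertices u, v with Adj u v, there exists a vertex w (a common parent) such that Adj w u and Adj w v both hold. -/
private lemma getLast?_append_right {α : Type*} (l₁ : List α) {l₂ : List α} (h : l₂ ≠ []) :
    (l₁ ++ l₂).getLast? = l₂.getLast? := by
  cases l₂ with
  | nil => exact absurd rfl h
  | cons a t =>
    rw [List.getLast?_append]
    obtain ⟨b, hb⟩ : ∃ b, (a :: t).getLast? = some b :=
      ⟨_, List.getLast?_eq_getLast (l := a :: t) (by simp)⟩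
    simp [hb]

private lemma head?_append_left {α : Type*} {l₁ : List α} (l₂ : List α) (h : l₁ ≠ []) :
    (l₁ ++ l₂).head? = l₁.head? := by
  rw [List.head?_append]
  cases l₁ with
  | nil => exact absurd rfl h
  | cons a t => simp [Option.or]

private lemma chain'_lift {V : Type} {Adj : V → V → Prop} {u v : V} :
    ∀ {l : List V}, l.Chain' (fun x y => Adj x y ∨ (y = v ∧ Adj x u)) →
      (∀ x ∈ l.tail, x ≠ v) → l.Chain' Adj := by
  intro l
  induction l with
  | nil => intro _ _; exact List.IsChain.nil
  | cons a t ih =>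
    intro h hv
    cases t with
    | nil => exact List.IsChain.singleton _
    | cons b s =>
      simp only [List.Chain', List.isChain_cons_cons] at h ⊢
      refine ⟨?_, ih h.2 (fun x hx => hv x (List.mem_cons_of_mem _ hx))⟩
      rcases h.1 with h1 | h1
      · exact h1
      · exact absurd h1.1 (hv b List.mem_cons_self)

private lemma cycle_lift {V : Type} {Adj : V → V → Prop} {u v : V}
    (huv : Adj u v) (hne : u ≠ v)
    {l : List V} (hu : u ∉ l)
    (h : IsCycle (fun x y => Adj x y ∨ (y = v ∧ Adj x u)) l) :
    ∃ l', IsCycle Adj l' ∧ ∀ x ∈ l', x ∈ l ∨ (x = u ∧ v ∈ l) := by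
  obtain ⟨hnil, hnd, hch, hwrap⟩ := h
  by_cases hv : v ∈ l
  · obtain ⟨p, q, rfl⟩ := List.append_of_mem hv
    have hnd' := (List.nodup_middle (a := v) (l₁ := p) (l₂ := q)).mp hnd
    have hvp : v ∉ p := fun hx => (List.nodup_cons.mp hnd').1 (List.mem_append_left _ hx)
    have hvq : v ∉ q := fun hx => (List.nodup_cons.mp hnd').1 (List.mem_append_right _ hx)
    obtain ⟨hcp, hcvq, hjoin⟩ := List.isChain_append.mp hch
    have hcp' : p.Chain' Adj :=
      chain'_lift hcp (fun x hx hxv => hvp (hxv ▸ List.mem_of_mem_tail hx))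
    have hcvq' : (v :: q).Chain' Adj :=
      chain'_lift hcvq (fun x hx hxv => hvq (hxv ▸ hx))
    cases p with
    | nil =>
      simp only [List.nil_append] at *
      have hgl := List.getLast?_eq_getLast (l := v :: q) (by simp)
      have hwv := hwrap _ (by rw [hgl]; rfl) v rfl
      rcases hwv with hwv | hwv
      · -- genuine wrap edge: l itself works
        exact ⟨v :: q, ⟨by simp, hnd, hcvq', by
          intro x hx y hy
          rw [hgl, Option.mem_some_iff] at hx
          rw [List.head?_cons, Option.mem_some_iff] at hy
          subst hx; subst hy; exact hwv⟩, fun x hx => Or.inl hx⟩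
      · -- fake wrap edge: prepend u
        refine ⟨u :: v :: q, ⟨by simp, ?_, ?_, ?_⟩, ?_⟩
        · exact List.nodup_cons.mpr ⟨hu, hnd⟩
        · exact List.isChain_cons_cons.mpr ⟨huv, hcvq'⟩
        · intro x hx y hy
          rw [List.getLast?_cons_cons, hgl, Option.mem_some_iff] at hx
          rw [List.head?_cons, Option.mem_some_iff] at hy
          subst hx; subst hy; exact hwv.2
        · intro x hx
          rcases List.mem_cons.mp hx with rfl | hx
          · exact Or.inr ⟨rfl, List.mem_cons_self⟩
          · exact Or.inl hx
    | cons a p' =>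
      set p := a :: p' with hp
      have hpne : p ≠ [] := by simp [hp]
      have hglp := List.getLast?_eq_getLast (l := p) hpne
      have hin := hjoin _ (by rw [hglp]; rfl) v rfl
      -- wrap edge of original cycle is genuine
      have hgl : (p ++ v :: q).getLast? = (v :: q).getLast? := getLast?_append_right p (by simp)
      have hhd : (p ++ v :: q).head? = p.head? := head?_append_left _ hpne
      have hwrap' : ∀ x ∈ (v :: q).getLast?, ∀ y ∈ p.head?, Adj x y := by
        intro x hx y hy
        have hyp : y ∈ p := List.mem_of_mem_head? hy
        have := hwrap x (by rw [hgl]; exact hx) y (by rw [hhd]; exact hy)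
        rcases this with h1 | h1
        · exact h1
        · exact absurd (h1.1 ▸ hyp) hvp
      rcases hin with hin | hin
      · -- genuine in-edge: l itself
        refine ⟨p ++ v :: q, ⟨by simp, hnd, ?_, ?_⟩, fun x hx => Or.inl hx⟩
        · refine List.isChain_append.mpr ⟨hcp', hcvq', ?_⟩
          intro x hx y hy
          rw [hglp, Option.mem_some_iff] at hx
          rw [List.head?_cons, Option.mem_some_iff] at hy
          subst hx; subst hy; exact hin
        · intro x hx y hy
          rw [hgl] at hx; rw [hhd] at hy
          exact hwrap' x hx y hy
      · -- fake in-edge: insert u before v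
        refine ⟨p ++ u :: v :: q, ⟨by simp, ?_, ?_, ?_⟩, ?_⟩
        · exact (List.nodup_middle (a := u) (l₁ := p) (l₂ := v :: q)).mpr
            (List.nodup_cons.mpr ⟨hu, hnd⟩)
        · refine List.isChain_append.mpr ⟨hcp', List.isChain_cons_cons.mpr ⟨huv, hcvq'⟩, ?_⟩
          intro x hx y hy
          rw [hglp, Option.mem_some_iff] at hx
          rw [List.head?_cons, Option.mem_some_iff] at hy
          subst hx; subst hy; exact hin.2
        · intro x hx y hy
          rw [getLast?_append_right p (by simp), List.getLast?_cons_cons] at hx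
          rw [head?_append_left _ hpne] at hy
          exact hwrap' x hx y hy
        · intro x hx
          rcases List.mem_append.mp hx with h1 | h1
          · exact Or.inl (List.mem_append_left _ h1)
          · rcases List.mem_cons.mp h1 with rfl | h1
            · exact Or.inr ⟨rfl, List.mem_append_right _ List.mem_cons_self⟩
            · exact Or.inl (List.mem_append_right _ h1)
  · -- v not in l: all edges genuine
    refine ⟨l, ⟨hnil, hnd, ?_, ?_⟩, fun x hx => Or.inl hx⟩
    · exact chain'_lift hch (fun x hx hxv => hv (hxv ▸ List.mem_of_mem_tail hx))
    · intro x hx y hy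
      rcases hwrap x hx y hy with h1 | h1
      · exact h1
      · exact absurd (h1.1 ▸ List.mem_of_mem_head? hy) hv

/-- In a `(k,r)`-critical digraph every edge `uv` has a witness: a common
parent `w` of both `u` and `v`. -/
theorem critical_edge_has_witness (k r : ℕ) (hk : 0 < k) (hr : 0 < r)
    (V : Type) [Finite V] [Nonempty V] (Adj : V → V → Prop)
    (hc : IsCritical k r Adj) :
    ∀ u v, Adj u v → ∃ w, Adj w u ∧ Adj w v := by
  intro u v huv
  by_contra hw
  push_neg at hw
  have hne : u ≠ v := fun h => hw u (h ▸ huv) huv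
  have hvu : v ≠ u := hne.symm
  obtain ⟨hrout, hnocyc, hmin, -, -⟩ := hc
  haveI : Nonempty {x : V // x ≠ u} := ⟨⟨v, hvu⟩⟩
  set B : {x : V // x ≠ u} → {x : V // x ≠ u} → Prop :=
    fun x y => Adj x.1 y.1 ∨ (y.1 = v ∧ Adj x.1 u) with hB
  -- B is r-out
  have hBrout : IsROut B r := by
    classical
    intro x
    set f : V → {x : V // x ≠ u} := fun z => if h : z = u then ⟨v, hvu⟩ else ⟨z, h⟩ with hf
    have hval : ∀ z, (f z).1 = if z = u then v else z := by
      intro z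
      by_cases h : z = u <;> simp [hf, h]
    have hinj : Set.InjOn f {z | Adj x.1 z} := by
      intro z₁ hz₁ z₂ hz₂ hz
      have hz' : (f z₁).1 = (f z₂).1 := congrArg Subtype.val hz
      rw [hval, hval] at hz'
      by_cases h1 : z₁ = u <;> by_cases h2 : z₂ = u
      · rw [h1, h2]
      · rw [if_pos h1, if_neg h2] at hz'
        exact (hw x.1 (show Adj x.1 u by rwa [h1] at hz₁)
          (show Adj x.1 v by rwa [← hz'] at hz₂)).elim
      · rw [if_neg h1, if_pos h2] at hz'
        exact (hw x.1 (show Adj x.1 u by rwa [h2] at hz₂)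
          (show Adj x.1 v by rwa [hz'] at hz₁)).elim
      · rw [if_neg h1, if_neg h2] at hz'
        exact hz'
    have hsub : f '' {z | Adj x.1 z} ⊆ {y | B x y} := by
      rintro y ⟨z, hz, rfl⟩
      by_cases h1 : z = u
      · simp only [hf, dif_pos h1]
        exact Or.inr ⟨rfl, h1 ▸ hz⟩
      · simp only [hf, dif_neg h1]
        exact Or.inl hz
    calc r ≤ {z | Adj x.1 z}.ncard := hrout x.1
      _ = (f '' {z | Adj x.1 z}).ncard := (Set.ncard_image_of_injOn hinj).symm
      _ ≤ {y | B x y}.ncard := Set.ncard_le_ncard hsub (Set.toFinite _)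
  -- B has no k+1 disjoint cycles
  have hBnocyc : ¬ HasDisjointCycles B (k + 1) := by
    rintro ⟨c, hcyc, hdisj⟩
    apply hnocyc
    have key : ∀ i, ∃ l', IsCycle Adj l' ∧
        ∀ x ∈ l', x ∈ (c i).map Subtype.val ∨ (x = u ∧ v ∈ (c i).map Subtype.val) := by
      intro i
      obtain ⟨hnil, hnd, hch, hwrap⟩ := hcyc i
      refine cycle_lift huv hne ?_ ⟨?_, ?_, ?_, ?_⟩
      · intro hmem
        obtain ⟨a, _, ha⟩ := List.mem_map.mp hmem
        exact a.2 ha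
      · intro h
        exact hnil (List.map_eq_nil_iff.mp h)
      · exact hnd.map Subtype.val_injective
      · exact (List.isChain_map _).mpr hch
      · intro x hx y hy
        rw [List.getLast?_map, Option.mem_map] at hx
        rw [List.head?_map, Option.mem_map] at hy
        obtain ⟨a, ha, rfl⟩ := hx
        obtain ⟨b, hb, rfl⟩ := hy
        exact hwrap a ha b hb
    choose L hL hLmem using key
    refine ⟨L, hL, ?_⟩
    intro i j hij x hxi hxj
    have hmi := hLmem i x hxi
    have hmj := hLmem j x hxj
    have hvmem : ∀ t, v ∈ ((c t).map Subtype.val) → (⟨v, hvu⟩ : {x : V // x ≠ u}) ∈ c t := by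
      intro t ht
      obtain ⟨a, ha, ha'⟩ := List.mem_map.mp ht
      have : a = ⟨v, hvu⟩ := Subtype.ext ha'
      exact this ▸ ha
    have humem : ∀ t, u ∉ ((c t).map Subtype.val) := by
      intro t ht
      obtain ⟨a, _, ha⟩ := List.mem_map.mp ht
      exact a.2 ha
    rcases hmi with hmi | ⟨rfl, hvi⟩
    · rcases hmj with hmj | ⟨rfl, _⟩
      · obtain ⟨a, ha, rfl⟩ := List.mem_map.mp hmi
        obtain ⟨b, hb, hb'⟩ := List.mem_map.mp hmj
        exact hdisj hij a ha (Subtype.ext hb' ▸ hb)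
      · exact humem i hmi
    · rcases hmj with hmj | ⟨-, hvj⟩
      · exact humem j hmj
      · exact hdisj hij _ (hvmem i hvi) (hvmem j hvj)
  have hle := hmin _ B hBrout hBnocyc
  haveI := Fintype.ofFinite V
  haveI : DecidableEq V := Classical.decEq V
  have hlt : Nat.card {x : V // x ≠ u} < Nat.card V := by
    rw [Nat.card_eq_fintype_card, Nat.card_eq_fintype_card]
    exact Fintype.card_subtype_lt (x := u) (by simp)
  omega
end

section
/- In a (k,r)-critical digraph, every vertex has out-degree exactly r. -/
/-- In a `(k,r)`-critical digraph every vertex has out-degree exactly `r`. -/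
theorem critical_outdegree_exact (k r : ℕ) (hk : 0 < k) (hr : 0 < r)
    (V : Type) [Finite V] [Nonempty V] (Adj : V → V → Prop)
    (hc : IsCritical k r Adj) :
    ∀ v, {u | Adj v u}.ncard = r := by
  intro v
  obtain ⟨h1, h2, h3, h4, h5⟩ := hc
  by_contra hne
  have hgt : r < {u | Adj v u}.ncard := lt_of_le_of_ne (h1 v) (Ne.symm hne)
  have hfin : {u | Adj v u}.Finite := Set.toFinite _
  obtain ⟨u, hu⟩ : {u | Adj v u}.Nonempty := by
    apply Set.nonempty_of_ncard_ne_zero; omega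
  set B : V → V → Prop := fun a b => Adj a b ∧ ¬(a = v ∧ b = u) with hB
  have hBout : IsROut B r := by
    intro w
    by_cases hw : w = v
    · subst hw
      have he : {x | B w x} = {x | Adj w x} \ {u} := by
        ext x; simp only [hB, Set.mem_setOf_eq, Set.mem_diff, Set.mem_singleton_iff]; tauto
      rw [he, Set.ncard_diff_singleton_of_mem hu]
      omega
    · have he : {x | B w x} = {x | Adj w x} := by
        ext x; simp only [hB, Set.mem_setOf_eq]; tauto
      rw [he]; exact h1 w
  have hBnc : ¬ HasDisjointCycles B (k + 1) := by
    rintro ⟨c, hc1, hc2⟩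
    exact h2 ⟨c, fun i => ⟨(hc1 i).1, (hc1 i).2.1,
      ((hc1 i).2.2.1).imp (fun {a b} h => h.1),
      fun x hx y hy => ((hc1 i).2.2.2 x hx y hy).1⟩, hc2⟩
  have hle := h4 V B hBout hBnc rfl
  have hsub : {p : V × V | B p.1 p.2} = {p : V × V | Adj p.1 p.2} \ {(v, u)} := by
    ext ⟨a, b⟩
    simp only [hB, Set.mem_setOf_eq, Set.mem_diff, Set.mem_singleton_iff, Prod.mk.injEq,
      Prod.ext_iff]
  have hmem : ((v, u) : V × V) ∈ {p : V × V | Adj p.1 p.2} := hu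
  have hpos : 0 < {p : V × V | Adj p.1 p.2}.ncard :=
    (Set.ncard_pos (Set.toFinite _)).mpr ⟨(v, u), hmem⟩
  have hlt : {p : V × V | B p.1 p.2}.ncard < {p : V × V | Adj p.1 p.2}.ncard := by
    rw [hsub, Set.ncard_diff_singleton_of_mem hmem]
    omega
  omega
end
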